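/- We have det(I - X) = 1 - t^n and det(Σ_{i=0}^{m-1} X^i) = (1 - t^n)^{m-1}, where I is the m×m identity matrix. -/

import Mathlib

open Matrix Finset Equiv
open Fin.NatCast Fin.CommRing

def Dmat {R : Type*} [CommRing R] (m : ℕ) (t : R) (k : ℕ) : Matrix (Fin m) (Fin m) R :=
  Matrix.of fun i j => if (j : ℕ) = ((i : ℕ) + k) % m then t ^ (((i : ℕ) + k) / m) else 0

variable {R : Type*} [CommRing R]

lemma Dmat_zero (m : ℕ) (t : R) : Dmat m t 0 = 1 := by
  ext i j
  simp only [Dmat, Matrix.of_apply, Matrix.one_apply]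
  rw [Nat.add_zero, Nat.mod_eq_of_lt i.isLt, Nat.div_eq_of_lt i.isLt, pow_zero]
  simp [Fin.ext_iff, eq_comm]

lemma Dmat_mul (m : ℕ) (hm : 0 < m) (t : R) (k : ℕ) :
    Dmat m t k * Dmat m t 1 = Dmat m t (k + 1) := by
  ext i j
  rw [Matrix.mul_apply]
  rw [Finset.sum_eq_single (⟨((i : ℕ) + k) % m, Nat.mod_lt _ hm⟩ : Fin m)]
  · simp only [Dmat, Matrix.of_apply, if_pos rfl]
    have h1 : ((((i : ℕ) + k) % m) + 1) % m = ((i : ℕ) + (k + 1)) % m := by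
      rw [Nat.mod_add_mod, Nat.add_assoc]
    have h2 : ((i : ℕ) + (k + 1)) / m = ((i : ℕ) + k) / m + (((i : ℕ) + k) % m + 1) / m := by
      have hd := Nat.div_add_mod ((i : ℕ) + k) m
      have h3 : (i : ℕ) + (k + 1) = m * (((i : ℕ) + k) / m) + (((i : ℕ) + k) % m + 1) := by
        omega
      rw [h3, Nat.mul_add_div hm]
    simp only [h1, h2, mul_ite, mul_zero, pow_add, if_true]
  · intro b _ hb
    have : (b : ℕ) ≠ ((i : ℕ) + k) % m := fun h => hb (Fin.ext h)
    simp only [Dmat, Matrix.of_apply, if_neg this, zero_mul]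
  · intro h; exact absurd (Finset.mem_univ _) h

lemma Dmat_pow (m : ℕ) (hm : 0 < m) (t : R) (k : ℕ) :
    Dmat m t 1 ^ k = Dmat m t k := by
  induction k with
  | zero => rw [pow_zero, Dmat_zero]
  | succ k ih => rw [pow_succ, ih, Dmat_mul m hm]

lemma Dmat_mul_m (m : ℕ) (hm : 0 < m) (t : R) (k : ℕ) :
    Dmat m t (k * m) = (t ^ k) • (1 : Matrix (Fin m) (Fin m) R) := by
  ext i j
  simp only [Dmat, Matrix.of_apply, Matrix.smul_apply, Matrix.one_apply, smul_eq_mul]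
  rw [Nat.add_mul_mod_self_right, Nat.mod_eq_of_lt i.isLt,
    Nat.add_mul_div_right _ _ hm, Nat.div_eq_of_lt i.isLt, Nat.zero_add]
  by_cases h : i = j
  · simp [h, Fin.ext_iff]
  · rw [if_neg (fun hh => h (Fin.ext hh.symm)), if_neg h, mul_zero]

lemma sum_div_eq (m : ℕ) (hm : 0 < m) (n : ℕ) :
    ∑ i ∈ Finset.range m, (i + n) / m = n := by
  induction n with
  | zero => simp [Nat.div_eq_of_lt, Finset.sum_congr rfl fun i hi =>
      Nat.div_eq_of_lt (Finset.mem_range.mp hi)]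
  | succ n ih =>
    have h1 : ∑ i ∈ Finset.range (m + 1), (i + n) / m
        = (∑ i ∈ Finset.range m, ((i + 1) + n) / m) + n / m := by
      simpa using Finset.sum_range_succ' (fun k => (k + n) / m) m
    have h2 : ∑ i ∈ Finset.range (m + 1), (i + n) / m
        = (∑ i ∈ Finset.range m, (i + n) / m) + (m + n) / m := Finset.sum_range_succ _ _
    have h3 : (m + n) / m = n / m + 1 := by
      rw [Nat.add_comm, Nat.add_div_right _ hm]
    have h4 : ∑ i ∈ Finset.range m, (i + (n + 1)) / m
        = ∑ i ∈ Finset.range m, ((i + 1) + n) / m :=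
      Finset.sum_congr rfl fun i _ => by rw [show i + (n + 1) = (i + 1) + n by omega]
    omega

variable {R : Type*} [CommRing R]

-- dichotomy lemma
lemma perm_dichotomy (m : ℕ) [NeZero m] (c : Fin m) (hc : c ≠ 0)
    (hsur : ∀ d : Fin m, ∃ k : ℕ, k • c = d)
    (π : Equiv.Perm (Fin m)) (h : ∀ i, π i = i ∨ π i = i - c) :
    π = 1 ∨ π = Equiv.subRight c := by
  by_cases hall : ∀ i, π i = i
  · left; ext i; simp [hall i]
  · right
    push_neg at hall
    obtain ⟨i₀, hi₀⟩ := hall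
    have hi₀' : π i₀ = i₀ - c := (h i₀).resolve_left hi₀
    have hstep : ∀ i : Fin m, π i = i - c → π (i - c) = (i - c) - c := by
      intro i hi
      rcases h (i - c) with h1 | h2
      · exfalso
        have h3 : i - c = i := π.injective (by rw [h1, hi])
        exact hc (sub_eq_self.mp h3)
      · exact h2
    have hk : ∀ k : ℕ, π (i₀ - k • c) = (i₀ - k • c) - c := by
      intro k
      induction k with
      | zero => simpa using hi₀'
      | succ k ih =>
        have h4 := hstep _ ih
        have heq : i₀ - (k + 1) • c = (i₀ - k • c) - c := by
          rw [succ_nsmul]; abel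
        rw [heq]
        exact h4
    apply Equiv.ext
    intro i
    obtain ⟨k, hk'⟩ := hsur (i₀ - i)
    have h5 : i = i₀ - k • c := by rw [hk']; abel
    rw [h5, Equiv.subRight_apply]
    exact hk k

lemma addRight_eq_pow (m' : ℕ) (c : Fin (m' + 1)) :
    Equiv.addRight c = (finRotate (m' + 1)) ^ (c : ℕ) := by
  have key : ∀ (k : ℕ) (i : Fin (m' + 1)), ((finRotate (m' + 1)) ^ k) i = i + (k : Fin (m' + 1)) := by
    intro k
    induction k with
    | zero => intro i; simp
    | succ k ih =>
      intro i
      rw [pow_succ', Equiv.Perm.mul_apply, finRotate_succ_apply, ih, Nat.cast_add, Nat.cast_one]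
      abel
  apply Equiv.ext
  intro i
  show i + c = _
  rw [key, Fin.cast_val_eq_self]

lemma fin_smul_surj (m n : ℕ) [NeZero m] (hm : 1 < m) (hmn : Nat.Coprime m n) :
    ∀ d : Fin m, ∃ k : ℕ, k • ((n : Fin m)) = d := by
  intro d
  obtain ⟨e, -, he⟩ := Nat.exists_mul_mod_eq_one_of_coprime hmn.symm hm
  refine ⟨(d : ℕ) * e, ?_⟩
  have h1 : ((d : ℕ) * e) • ((n : Fin m)) = (((d : ℕ) * e * n : ℕ) : Fin m) := by
    rw [nsmul_eq_mul]; push_cast; ring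
  rw [h1]
  apply Fin.ext
  rw [Fin.val_natCast]
  have h2 : (d : ℕ) * e * n % m = (d : ℕ) % m := by
    have h3 : (d : ℕ) * e * n = (d : ℕ) * (n * e) := by ring
    rw [h3, Nat.mul_mod, he, Nat.mul_one, Nat.mod_eq_of_lt (Nat.mod_lt _ (by omega))]
  rw [h2, Nat.mod_eq_of_lt d.isLt]

variable {R : Type*} [CommRing R]

lemma neg_one_units_smul (N : ℕ) (x : R) : ((-1 : ℤˣ) ^ N) • x = (-1 : R) ^ N * x := by
  rcases Nat.even_or_odd N with he | ho
  · rw [he.neg_one_pow, he.neg_one_pow, one_smul, one_mul]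
  · rw [ho.neg_one_pow, ho.neg_one_pow, Units.neg_smul, one_smul, neg_one_mul]

lemma det_one_sub_Dmat (m n : ℕ) (hm : 1 < m) (hmn : Nat.Coprime m n) (t : R) :
    ((1 : Matrix (Fin m) (Fin m) R) - Dmat m t n).det = 1 - t ^ n := by
  haveI : NeZero m := ⟨by omega⟩
  obtain ⟨m', rfl⟩ : ∃ m', m = m' + 1 := ⟨m - 1, by omega⟩
  set m := m' + 1 with hmdef
  have hm0 : 0 < m := by omega
  set c : Fin m := (n : Fin m) with hcdef
  set M : Matrix (Fin m) (Fin m) R := 1 - Dmat m t n with hMdef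
  have hc : c ≠ 0 := by
    intro h
    have h1 : n % m = 0 := by
      have := congrArg Fin.val h
      simpa [hcdef, Fin.val_natCast] using this
    have hd : m ∣ n := Nat.dvd_of_mod_eq_zero h1
    have h2 : m ∣ Nat.gcd m n := Nat.dvd_gcd dvd_rfl hd
    rw [Nat.Coprime.gcd_eq_one hmn] at h2
    have := Nat.le_of_dvd one_pos h2
    omega
  have hcond : ∀ a i : Fin m, ((i : ℕ) = ((a : ℕ) + n) % m) ↔ i = a + c := by
    intro a i
    rw [Fin.ext_iff, Fin.val_add, Fin.val_natCast, Nat.add_mod_mod]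
  have hM : ∀ a i : Fin m, M a i
      = (if a = i then 1 else 0) - (if i = a + c then t ^ (((a : ℕ) + n) / m) else 0) := by
    intro a i
    rw [hMdef, Matrix.sub_apply, Matrix.one_apply]
    simp only [Dmat, Matrix.of_apply]
    by_cases h : i = a + c
    · rw [if_pos h, if_pos ((hcond a i).mpr h)]
    · rw [if_neg h, if_neg (fun hh => h ((hcond a i).mp hh))]
  set τ : Equiv.Perm (Fin m) := Equiv.subRight c with hτdef
  have hτapp : ∀ i, τ i = i - c := fun i => rfl
  have hne1τ : (1 : Equiv.Perm (Fin m)) ≠ τ := by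
    intro h
    have h0 : (0 : Fin m) = (0 : Fin m) - c := by
      conv_lhs => rw [show (0 : Fin m) = (1 : Equiv.Perm (Fin m)) 0 from rfl, h, hτapp]
    exact hc (by rw [zero_sub] at h0; exact neg_eq_zero.mp h0.symm)
  rw [Matrix.det_apply]
  rw [← Finset.sum_subset (Finset.subset_univ ({1, τ} : Finset (Equiv.Perm (Fin m))))]
  · rw [Finset.sum_pair hne1τ]
    have hdiag : ∀ i : Fin m, M i i = 1 := by
      intro i
      rw [hM, if_pos rfl, if_neg (fun h => hc (left_eq_add.mp h)), sub_zero]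
    have hterm1 : Equiv.Perm.sign (1 : Equiv.Perm (Fin m)) • ∏ i, M ((1 : Equiv.Perm (Fin m)) i) i = 1 := by
      rw [Equiv.Perm.sign_one, one_smul]
      rw [show (∏ i, M ((1 : Equiv.Perm (Fin m)) i) i) = ∏ _i : Fin m, (1 : R) from
        Finset.prod_congr rfl fun i _ => by rw [Equiv.Perm.one_apply, hdiag], Finset.prod_const_one]
    have hprod : ∏ i, M (τ i) i = (-1 : R) ^ m * t ^ n := by
      have h1 : ∀ i : Fin m, M (τ i) i = -(t ^ ((((i - c : Fin m) : ℕ) + n) / m)) := by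
        intro i
        rw [hτapp, hM, if_neg (fun h => hc (sub_eq_self.mp h)),
          if_pos (by rw [sub_add_cancel]), zero_sub]
      rw [Finset.prod_congr rfl (fun i _ => h1 i)]
      have h1' : ∀ i : Fin m, -(t ^ ((((i - c : Fin m) : ℕ) + n) / m))
          = (-1 : R) * t ^ ((((i - c : Fin m) : ℕ) + n) / m) := fun i => by ring
      rw [Finset.prod_congr rfl (fun i _ => h1' i), Finset.prod_mul_distrib,
        Finset.prod_const, Finset.card_univ, Fintype.card_fin,
        Finset.prod_pow_eq_pow_sum]
      congr 1
      have h2 : ∑ i : Fin m, (((i - c : Fin m) : ℕ) + n) / m = ∑ i : Fin m, ((i : ℕ) + n) / m :=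
        Equiv.sum_comp (Equiv.subRight c) (fun j => ((j : ℕ) + n) / m)
      rw [h2, Fin.sum_univ_eq_sum_range (fun i => (i + n) / m), sum_div_eq m hm0 n]
    have hsign : Equiv.Perm.sign τ = (-1 : ℤˣ) ^ (m' * (c : ℕ)) := by
      have h3 : Equiv.Perm.sign (Equiv.addRight c) = (-1 : ℤˣ) ^ (m' * (c : ℕ)) := by
        rw [addRight_eq_pow, map_pow, sign_finRotate, ← pow_mul]
        rfl
      have h4 : τ = (Equiv.addRight c)⁻¹ := by
        apply eq_inv_of_mul_eq_one_left
        apply Equiv.ext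
        intro i
        show τ (i + c) = i
        rw [hτapp, add_sub_cancel_right]
      rw [h4, map_inv, h3, ← inv_pow]
      norm_num
    have hodd : Odd (m' * (c : ℕ) + (m' + 1)) := by
      rcases Nat.even_or_odd m' with he | ho
      · exact (he.mul_right _).add_odd he.add_one
      · have hno : Odd n := by
          rw [Nat.odd_iff]
          rcases Nat.even_or_odd n with hev | hod
          · exfalso
            have h2m : (2 : ℕ) ∣ m := (ho.add_one).two_dvd
            have h21 : (2 : ℕ) ∣ Nat.gcd m n := Nat.dvd_gcd h2m hev.two_dvd
            rw [Nat.Coprime.gcd_eq_one hmn] at h21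
            have := Nat.le_of_dvd one_pos h21
            omega
          · exact Nat.odd_iff.mp hod
        have hcv : Odd (n % m) := by
          have hd := Nat.div_add_mod n m
          have hevp : Even (m * (n / m)) := (ho.add_one).mul_right _
          rw [Nat.even_iff] at hevp
          rw [Nat.odd_iff] at hno ⊢
          omega
        have hcv' : Odd (c : ℕ) := by rw [hcdef, Fin.val_natCast]; exact hcv
        exact (Nat.odd_mul.mpr ⟨ho, hcv'⟩).add_even ho.add_one
    have hterm2 : Equiv.Perm.sign τ • ∏ i, M (τ i) i = -(t ^ n) := by
      rw [hprod, hsign, neg_one_units_smul, ← mul_assoc, ← pow_add, hodd.neg_one_pow,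
        neg_one_mul]
    rw [hterm1, hterm2, ← sub_eq_add_neg]
  · intro π _ hπ
    simp only [Finset.mem_insert, Finset.mem_singleton] at hπ
    push_neg at hπ
    obtain ⟨hπ1, hπτ⟩ := hπ
    have hnot : ¬ (∀ i, π i = i ∨ π i = i - c) := by
      intro h
      rcases perm_dichotomy m c hc (fin_smul_surj m n hm hmn) π h with h' | h'
      · exact hπ1 h'
      · exact hπτ h'
    push_neg at hnot
    obtain ⟨i, hi1, hi2⟩ := hnot
    have hz : M (π i) i = 0 := by
      rw [hM, if_neg hi1, if_neg (fun h => hi2 (eq_sub_of_add_eq h.symm)), sub_zero]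
    have hz2 : (∏ j, M (π j) j) = 0 := Finset.prod_eq_zero (Finset.mem_univ i) hz
    rw [hz2, smul_zero]

lemma det_geom_Dmat {S : Type*} [CommRing S] [IsDomain S] (m n : ℕ) (hm : 1 < m)
    (hmn : Nat.Coprime m n) (t : S) (ht : (1 : S) - t ^ n ≠ 0) :
    (∑ i ∈ Finset.range m, (Dmat m t n) ^ i).det = (1 - t ^ n) ^ (m - 1) := by
  obtain ⟨k, rfl⟩ : ∃ k, m = k + 1 := ⟨m - 1, by omega⟩
  set m := k + 1 with hmdef
  have hm0 : 0 < m := by omega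
  have hgeom : (∑ i ∈ Finset.range m, (Dmat m t n) ^ i) * (Dmat m t n - 1)
      = (Dmat m t n) ^ m - 1 := geom_sum_mul _ m
  have hXm : (Dmat m t n) ^ m - 1 = (t ^ n - 1) • (1 : Matrix (Fin m) (Fin m) S) := by
    rw [← Dmat_pow m hm0 t n, ← pow_mul, Dmat_pow m hm0 t (n * m), Dmat_mul_m m hm0 t n,
      sub_smul, one_smul]
  have hdet := congrArg Matrix.det (hgeom.trans hXm)
  rw [Matrix.det_mul, Matrix.det_smul, Matrix.det_one, mul_one] at hdet
  have hsub : (Dmat m t n - 1 : Matrix (Fin m) (Fin m) S).det = (-1 : S) ^ m * (1 - t ^ n) := by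
    rw [show (Dmat m t n - 1 : Matrix (Fin m) (Fin m) S) = -(1 - Dmat m t n) from (neg_sub _ _).symm,
      Matrix.det_neg, det_one_sub_Dmat m n hm hmn t, Fintype.card_fin]
  rw [hsub] at hdet
  have h2 : (t ^ n - 1 : S) ^ (Fintype.card (Fin m))
      = ((-1 : S) ^ m * (1 - t ^ n)) * (1 - t ^ n) ^ k := by
    rw [Fintype.card_fin, show (t ^ n - 1 : S) = (-1) * (1 - t ^ n) by ring, mul_pow, hmdef,
      pow_succ]
    ring
  rw [h2] at hdet
  have hne : ((-1 : S) ^ m * (1 - t ^ n)) ≠ 0 :=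
    mul_ne_zero (pow_ne_zero _ (neg_ne_zero.mpr one_ne_zero)) ht
  have h3 := mul_right_cancel₀ hne (hdet.trans (mul_comm _ _))
  rw [h3, hmdef, Nat.add_sub_cancel]

theorem stmt_16 (m n : ℕ) (hm : 1 < m) (hn : 1 < n) (hmn : Nat.Coprime m n)
    (t : ℂ)
    (C X : Matrix (Fin m) (Fin m) ℂ)
    (hC : ∀ i j : Fin m, C i j =
      if (i : ℕ) + 1 = (j : ℕ) then 1
      else if (i : ℕ) = m - 1 ∧ (j : ℕ) = 0 then t else 0)
    (hX : X = C ^ n) :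
    ((1 : Matrix (Fin m) (Fin m) ℂ) - X).det = 1 - t ^ n ∧
    (∑ i ∈ Finset.range m, X ^ i).det = (1 - t ^ n) ^ (m - 1) := by
  have hm0 : 0 < m := by omega
  have hC' : C = Dmat m t 1 := by
    ext i j
    rw [hC]
    simp only [Dmat, Matrix.of_apply]
    by_cases h : (i : ℕ) + 1 = m
    · have hj : ((i : ℕ) + 1) % m = 0 := by rw [h, Nat.mod_self]
      have hd : ((i : ℕ) + 1) / m = 1 := by rw [h, Nat.div_self hm0]
      rw [hj, hd, pow_one]
      have hne : ¬ ((i : ℕ) + 1 = (j : ℕ)) := by have := j.isLt; omega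
      rw [if_neg hne]
      by_cases hj0 : (j : ℕ) = 0
      · rw [if_pos ⟨by omega, hj0⟩, if_pos hj0]
      · rw [if_neg (fun hh => hj0 hh.2), if_neg hj0]
    · have hlt : (i : ℕ) + 1 < m := by have := i.isLt; omega
      rw [Nat.mod_eq_of_lt hlt, Nat.div_eq_of_lt hlt, pow_zero]
      have hne : ¬ ((i : ℕ) = m - 1 ∧ (j : ℕ) = 0) := fun hh => by
        have := i.isLt; omega
      by_cases he : (i : ℕ) + 1 = (j : ℕ)
      · rw [if_pos he, if_pos he.symm]
      · rw [if_neg he, if_neg hne, if_neg (fun hh => he hh.symm)]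
  have hX' : X = Dmat m t n := by rw [hX, hC', Dmat_pow m hm0 t n]
  have hXne : (1 : Polynomial ℂ) - (Polynomial.X : Polynomial ℂ) ^ n ≠ 0 := by
    intro h
    have h1 : (1 : Polynomial ℂ) = Polynomial.X ^ n := sub_eq_zero.mp h
    have h2 := congrArg Polynomial.natDegree h1
    rw [Polynomial.natDegree_one, Polynomial.natDegree_X_pow] at h2
    omega
  have hmap : (Dmat m (Polynomial.X : Polynomial ℂ) n).map (Polynomial.evalRingHom t)
      = Dmat m t n := by
    ext i j
    simp only [Dmat, Matrix.map_apply, Matrix.of_apply]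
    split <;> simp
  refine ⟨by rw [hX']; exact det_one_sub_Dmat m n hm hmn t, ?_⟩
  rw [hX']
  have hsum : (∑ i ∈ Finset.range m, (Dmat m t n) ^ i)
      = ((∑ i ∈ Finset.range m, (Dmat m (Polynomial.X : Polynomial ℂ) n) ^ i).map
          (Polynomial.evalRingHom t)) := by
    rw [← RingHom.mapMatrix_apply, map_sum]
    refine Finset.sum_congr rfl fun i _ => ?_
    rw [map_pow, RingHom.mapMatrix_apply, hmap]
  rw [hsum, ← RingHom.mapMatrix_apply, ← RingHom.map_det, det_geom_Dmat m n hm hmn (Polynomial.X : Polynomial ℂ) hXne]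
  simp
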